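/- For every finite threshold tolerance graph G=(V,E) there exist a finite tree T, an assignment w of nonnegative real weights to the edges of T, an injection mapping each vertex of V to a leaf of T, and a real number k, such that for all distinct u,v ∈ V, {u,v} ∈ E if and only if d_T(u,v) ≥ k, where d_T(u,v) is the sum of the weights of the edges on the unique path in T between the leaves corresponding to u and v. (The mLPG-membership statement actually established by the proof of Theorem 3.) -/

import Mathlib

open SimpleGraph

lemma acyclic_of_unique_smaller {n : ℕ} (G : SimpleGraph (Fin n))
    (h : ∀ x y z : Fin n, G.Adj x y → G.Adj x z → y < x → z < x → y = z) :
    G.IsAcyclic := by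
  intro u c0 hc0
  obtain ⟨v, hv, hmax⟩ : ∃ v ∈ c0.support, ∀ x ∈ c0.support, x ≤ v := by
    have hne : c0.support.toFinset.Nonempty := by
      simp [List.toFinset_nonempty_iff]
    exact ⟨c0.support.toFinset.max' hne, by
      simpa using c0.support.toFinset.max'_mem hne, fun x hx =>
      Finset.le_max' _ x (by simpa using hx)⟩
  set c := c0.rotate v hv with hc
  have hcyc : c.IsCycle := hc0.rotate hv
  have hsupp : ∀ x ∈ c.support, x ≤ v := by
    intro x hx
    rcases List.mem_cons.mp (SimpleGraph.Walk.support_eq_cons c ▸ hx) with heq | hx'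
    · exact le_of_eq heq
    · exact hmax x (List.mem_of_mem_tail ((SimpleGraph.Walk.support_rotate c0 v hv).mem_iff.mp hx'))
  clear_value c
  -- decompose the cycle
  cases c with
  | nil => exact hcyc.ne_nil rfl
  | @cons _ y _ hadj p =>
    -- last edge: decompose p.reverse
    cases hp : p.reverse with
    | nil =>
      have hl : p.length = 0 := by simpa using congrArg SimpleGraph.Walk.length hp
      have h3 := hcyc.three_le_length
      simp [SimpleGraph.Walk.length_cons, hl] at h3
    | @cons _ z _ hadj2 q =>
      have hzedge : s(v, z) ∈ p.edges := by
        have : p.reverse.edges = s(v,z) :: q.edges := by rw [hp]; simp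
        have h2 : s(v,z) ∈ p.reverse.edges := by rw [this]; exact List.mem_cons_self
        simpa using h2
      have hynodup : s(v, y) ∉ p.edges := by
        have := hcyc.edges_nodup
        simp at this
        exact this.1
      have hyz : y ≠ z := by
        intro hyz; exact hynodup (hyz ▸ hzedge)
      have hyv : y ∈ (SimpleGraph.Walk.cons hadj p).support := by simp
      have hzv : z ∈ (SimpleGraph.Walk.cons hadj p).support := by
        have : z ∈ p.reverse.support := by rw [hp]; simp
        simp at this
        simp [this]
      have hylt : y < v := lt_of_le_of_ne (hsupp y hyv) (fun hh => G.loopless.irrefl v (hh ▸ hadj))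
      have hzlt : z < v := lt_of_le_of_ne (hsupp z hzv) (fun hh => G.loopless.irrefl v (hh ▸ hadj2))
      exact hyz (h v y z hadj hadj2 hylt hzlt)

namespace TTmLPG

/-- Adjacency (on values) of the caterpillar: spine `0,…,m-1`, leaf `m+i` attached to `i`. -/
def catAdj (m : ℕ) (x y : ℕ) : Prop :=
  (y = x + 1 ∧ y < m) ∨ (x = y + 1 ∧ x < m) ∨ (y = x + m ∧ x < m) ∨ (x = y + m ∧ y < m)

/-- The caterpillar graph on `Fin (2*m)`. -/
def catG (m : ℕ) : SimpleGraph (Fin (2 * m)) where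
  Adj x y := catAdj m x.val y.val
  symm := by constructor; intro x y h; unfold catAdj at *; omega
  loopless := by constructor; intro x; unfold catAdj; omega

lemma catG_adj {m : ℕ} {x y : Fin (2 * m)} : (catG m).Adj x y ↔ catAdj m x.val y.val := Iff.rfl

lemma catG_unique_smaller (m : ℕ) (x y z : Fin (2 * m)) (h1 : (catG m).Adj x y)
    (h2 : (catG m).Adj x z) (hy : y < x) (hz : z < x) : y = z := by
  rw [catG_adj] at h1 h2
  rw [Fin.lt_def] at hy hz
  unfold catAdj at h1 h2
  exact Fin.ext (by omega)

lemma catG_acyclic (m : ℕ) : (catG m).IsAcyclic :=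
  acyclic_of_unique_smaller _ (catG_unique_smaller m)

lemma catG_connected (m : ℕ) (hm : 0 < m) : (catG m).Connected := by
  have h02 : 0 < 2 * m := by omega
  have key : ∀ n : ℕ, ∀ x : Fin (2 * m), x.val = n → (catG m).Reachable x ⟨0, h02⟩ := by
    intro n
    induction n using Nat.strong_induction_on with
    | _ n ih =>
      intro x hx
      by_cases h0 : x.val = 0
      · have hx0 : x = ⟨0, h02⟩ := by ext; simpa using h0
        rw [hx0]
      · by_cases hsm : x.val < m
        · have hadj : (catG m).Adj x ⟨x.val - 1, by omega⟩ := by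
            show catAdj m x.val (x.val - 1); unfold catAdj; omega
          exact hadj.reachable.trans (ih (x.val - 1) (by omega) _ rfl)
        · have hadj : (catG m).Adj x ⟨x.val - m, by omega⟩ := by
            show catAdj m x.val (x.val - m); unfold catAdj; have := x.isLt; omega
          exact hadj.reachable.trans (ih (x.val - m) (by omega) _ rfl)
  haveI : Nonempty (Fin (2 * m)) := ⟨⟨0, h02⟩⟩
  exact Connected.mk (fun a b => (key a.val a rfl).trans (key b.val b rfl).symm)

/-- the leaf attached to a leaf vertex is its unique neighbor -/
lemma catG_leaf_unique (m : ℕ) (i : ℕ) (hi : i < m) :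
    ∃! x : Fin (2 * m), (catG m).Adj ⟨m + i, by omega⟩ x := by
  refine ⟨⟨i, by omega⟩, ?_, ?_⟩
  · show catAdj m (m + i) i; unfold catAdj; omega
  · intro x hx
    have hx' : catAdj m (m + i) x.val := hx
    unfold catAdj at hx'
    apply Fin.ext
    show x.val = i
    omega

end TTmLPG

namespace TTmLPG

lemma concat_isPath {V : Type*} {G : SimpleGraph V} {u v w : V} (p : G.Walk u v)
    (h : G.Adj v w) (hp : p.IsPath) (hw : w ∉ p.support) : (p.concat h).IsPath := by
  rw [← SimpleGraph.Walk.isPath_reverse_iff, SimpleGraph.Walk.reverse_concat]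
  rw [SimpleGraph.Walk.cons_isPath_iff]
  exact ⟨hp.reverse, by simpa using hw⟩

def spineWalk (m i : ℕ) (hi : i < m) : (d : ℕ) → (h : i + d < m) →
    (catG m).Walk ⟨i, by omega⟩ ⟨i + d, by omega⟩
  | 0, _ => SimpleGraph.Walk.nil
  | d+1, h => (spineWalk m i hi d (by omega)).concat
      (show (catG m).Adj ⟨i+d, by omega⟩ ⟨i+d+1, by omega⟩ by
        show catAdj m (i+d) (i+d+1); unfold catAdj; omega)

lemma spineWalk_support (m i : ℕ) (hi : i < m) : ∀ (d : ℕ) (h : i + d < m),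
    ∀ x ∈ (spineWalk m i hi d h).support, i ≤ x.val ∧ x.val ≤ i + d := by
  intro d
  induction d with
  | zero =>
    intro h x hx
    simp [spineWalk] at hx
    all_goals subst hx
    all_goals simp
  | succ d ih =>
    intro h x hx
    rw [spineWalk, SimpleGraph.Walk.support_concat,
      List.mem_append] at hx
    rcases hx with hx | hx
    · have := ih (by omega) x hx; omega
    · simp at hx
      subst hx
      simp
      all_goals omega

lemma spineWalk_isPath (m i : ℕ) (hi : i < m) : ∀ (d : ℕ) (h : i + d < m),
    (spineWalk m i hi d h).IsPath := by
  intro d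
  induction d with
  | zero => intro h; simp [spineWalk]
  | succ d ih =>
    intro h
    rw [spineWalk]
    refine concat_isPath _ _ (ih (by omega)) ?_
    intro hmem
    have := spineWalk_support m i hi d (by omega) _ hmem
    simp at this
    all_goals omega

lemma spineWalk_sum (m i : ℕ) (hi : i < m) (w : Sym2 (Fin (2*m)) → ℝ) (P : ℕ → ℝ)
    (hw : ∀ k (hk : k + 1 < m), w s(⟨k, by omega⟩, ⟨k+1, by omega⟩) = P (k+1) - P k) :
    ∀ (d : ℕ) (h : i + d < m),
      (((spineWalk m i hi d h).edges.map w).sum) = P (i + d) - P i := by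
  intro d
  induction d with
  | zero => intro h; simp [spineWalk]
  | succ d ih =>
    intro h
    rw [spineWalk, SimpleGraph.Walk.edges_concat, List.concat_eq_append, List.map_append,
      List.sum_append]
    rw [ih (by omega)]
    simp only [List.map_cons, List.map_nil, List.sum_cons, List.sum_nil]
    have he : w s(⟨i+d, by omega⟩, ⟨i+(d+1), by omega⟩) = P (i+d+1) - P (i+d) :=
      hw (i+d) (by omega)
    rw [he]
    have h2 : P (i + (d+1)) = P (i+d+1) := rfl
    rw [h2]
    ring

end TTmLPG

namespace TTmLPG

/-- edge weights, as a function of the (natural number) endpoints -/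
noncomputable def Wn (m : ℕ) (A P : ℕ → ℝ) (x y : ℕ) : ℝ :=
  if y = x + 1 ∧ y < m then P y - P x
  else if x = y + 1 ∧ x < m then P x - P y
  else if y = x + m ∧ x < m then A x
  else if x = y + m ∧ y < m then A y
  else 0

lemma Wn_symm (m : ℕ) (A P : ℕ → ℝ) (a b : Fin (2 * m)) :
    Wn m A P a.val b.val = Wn m A P b.val a.val := by
  unfold Wn
  split_ifs <;> first | rfl | omega

noncomputable def wcat (m : ℕ) (A P : ℕ → ℝ) : Sym2 (Fin (2 * m)) → ℝ :=
  Sym2.lift ⟨fun a b => Wn m A P a.val b.val, Wn_symm m A P⟩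

lemma wcat_apply (m : ℕ) (A P : ℕ → ℝ) (a b : Fin (2 * m)) :
    wcat m A P s(a, b) = Wn m A P a.val b.val := rfl

lemma Wn_spine (m : ℕ) (A P : ℕ → ℝ) (k : ℕ) (hk : k + 1 < m) :
    Wn m A P k (k + 1) = P (k + 1) - P k := by
  unfold Wn; rw [if_pos ⟨rfl, hk⟩]

lemma Wn_leaf (m : ℕ) (A P : ℕ → ℝ) (k : ℕ) (hk : k < m) :
    Wn m A P k (m + k) = A k := by
  unfold Wn
  rw [if_neg (by omega), if_neg (by omega), if_pos ⟨by omega, hk⟩]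

lemma Wn_leaf' (m : ℕ) (A P : ℕ → ℝ) (k : ℕ) (hk : k < m) :
    Wn m A P (m + k) k = A k := by
  unfold Wn
  rw [if_neg (by omega), if_neg (by omega), if_neg (by omega), if_pos ⟨by omega, hk⟩]

lemma wcat_nonneg (m : ℕ) (A P : ℕ → ℝ) (hA : ∀ k, k < m → 0 ≤ A k)
    (hP : ∀ k, k + 1 < m → P k ≤ P (k + 1)) :
    ∀ e ∈ (catG m).edgeSet, 0 ≤ wcat m A P e := by
  intro e
  induction e using Sym2.ind with
  | _ a b =>
    intro _
    rw [wcat_apply]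
    unfold Wn
    split_ifs with h1 h2 h3 h4
    · have := hP a.val (by omega); rw [h1.1]; linarith
    · have := hP b.val (by omega); rw [h2.1]; linarith
    · exact hA a.val h3.2
    · exact hA b.val h4.2
    · exact le_refl 0

def leafWalk (m i d : ℕ) (h : i + d < m) :
    (catG m).Walk ⟨m + i, by omega⟩ ⟨m + (i + d), by omega⟩ :=
  SimpleGraph.Walk.cons
    (show (catG m).Adj ⟨m + i, by omega⟩ ⟨i, by omega⟩ by
      show catAdj m (m + i) i; unfold catAdj; omega)
    ((spineWalk m i (by omega) d h).concat
      (show (catG m).Adj ⟨i + d, by omega⟩ ⟨m + (i + d), by omega⟩ by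
        show catAdj m (i + d) (m + (i + d)); unfold catAdj; omega))

lemma leafWalk_isPath (m i d : ℕ) (h : i + d < m) (hd : 0 < d) :
    (leafWalk m i d h).IsPath := by
  rw [leafWalk, SimpleGraph.Walk.cons_isPath_iff]
  constructor
  · refine concat_isPath _ _ (spineWalk_isPath m i (by omega) d h) ?_
    intro hmem
    have := spineWalk_support m i (by omega) d h _ hmem
    simp at this
    all_goals omega
  · intro hmem
    rw [SimpleGraph.Walk.support_concat, List.mem_append] at hmem
    rcases hmem with hmem | hmem
    · have := spineWalk_support m i (by omega) d h _ hmem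
      simp at this
      all_goals omega
    · simp at hmem
      omega

lemma leafWalk_sum (m i d : ℕ) (h : i + d < m) (A P : ℕ → ℝ) :
    (((leafWalk m i d h).edges.map (wcat m A P)).sum) =
      A i + (P (i + d) - P i) + A (i + d) := by
  rw [leafWalk]
  rw [SimpleGraph.Walk.edges_cons, SimpleGraph.Walk.edges_concat, List.concat_eq_append]
  rw [List.map_cons, List.sum_cons, List.map_append, List.sum_append]
  rw [spineWalk_sum m i (by omega) (wcat m A P) P
    (fun k hk => by rw [wcat_apply]; exact Wn_spine m A P k hk)]
  simp only [List.map_cons, List.map_nil, List.sum_cons, List.sum_nil]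
  rw [wcat_apply, wcat_apply]
  rw [show Wn m A P (m + i) i = A i from Wn_leaf' m A P i (by omega)]
  rw [show Wn m A P (i + d) (m + (i + d)) = A (i + d) from Wn_leaf m A P (i + d) h]
  ring

end TTmLPG

namespace TTmLPG

lemma exists_path_reverse {V : Type*} {G : SimpleGraph V} (w : Sym2 V → ℝ) (k : ℝ) {a b : V} :
    (∃ p : G.Walk a b, p.IsPath ∧ k ≤ (p.edges.map w).sum) ↔
      (∃ p : G.Walk b a, p.IsPath ∧ k ≤ (p.edges.map w).sum) := by
  constructor <;>
    (rintro ⟨p, hp, hs⟩;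
     exact ⟨p.reverse, hp.reverse, by
       rwa [SimpleGraph.Walk.edges_reverse, List.map_reverse, List.sum_reverse]⟩)

lemma catG_dist_iff (m : ℕ) (A P : ℕ → ℝ) (i j : ℕ) (hij : i < j) (hj : j < m) (k : ℝ) :
    (∃ p : (catG m).Walk ⟨m + i, by omega⟩ ⟨m + j, by omega⟩,
        p.IsPath ∧ k ≤ (p.edges.map (wcat m A P)).sum) ↔
      k ≤ A i + (P j - P i) + A j := by
  have hcast : (⟨m + (i + (j - i)), by omega⟩ : Fin (2*m)) = ⟨m + j, by omega⟩ := by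
    apply Fin.ext; show m + (i + (j - i)) = m + j; omega
  set q : (catG m).Walk ⟨m + i, by omega⟩ ⟨m + j, by omega⟩ :=
    (leafWalk m i (j - i) (by omega)).copy rfl hcast with hq
  have hqpath : q.IsPath := by
    rw [hq, SimpleGraph.Walk.isPath_copy]
    exact leafWalk_isPath m i (j - i) (by omega) (by omega)
  have hqsum : (q.edges.map (wcat m A P)).sum = A i + (P j - P i) + A j := by
    rw [hq, SimpleGraph.Walk.edges_copy, leafWalk_sum m i (j - i) (by omega) A P,
      show i + (j - i) = j by omega]
  constructor
  · rintro ⟨p, hp, hk⟩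
    have hpq : p = q :=
      congrArg Subtype.val ((catG_acyclic m).path_unique ⟨p, hp⟩ ⟨q, hqpath⟩)
    rw [hpq, hqsum] at hk
    exact hk
  · intro hk
    exact ⟨q, hqpath, by rw [hqsum]; exact hk⟩

end TTmLPG


/-- `G` is a threshold tolerance graph: each vertex gets a positive weight `g v` and a
positive tolerance `t v`, and two distinct vertices are adjacent iff the sum of their
weights is at least the minimum of their tolerances. -/
def IsThresholdToleranceGraph {V : Type} [Fintype V] (G : SimpleGraph V) : Prop :=
  ∃ g t : V → ℝ,
    (∀ v, 0 < g v) ∧ (∀ v, 0 < t v) ∧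
    ∀ x y : V, x ≠ y →
      (G.Adj x y ↔ min (t x) (t y) ≤ g x + g y)

/-- For every finite threshold tolerance graph there are a finite tree with nonnegative
edge weights, an injection of the vertices into the leaves, and a threshold `k` such
that two distinct vertices are adjacent iff the weighted tree-distance of the
corresponding leaves is at least `k` (membership in mLPG). -/
theorem thresholdTolerance_mLPG {V : Type} [Fintype V] (G : SimpleGraph V)
    (hG : IsThresholdToleranceGraph G) :
    ∃ (n : ℕ) (T : SimpleGraph (Fin n)) (w : Sym2 (Fin n) → ℝ)
        (f : V → Fin n) (k : ℝ),
      T.Connected ∧ T.IsAcyclic ∧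
      (∀ e ∈ T.edgeSet, 0 ≤ w e) ∧
      Function.Injective f ∧
      (∀ v : V, ∃! x : Fin n, T.Adj (f v) x) ∧
      ∀ u v : V, u ≠ v →
        (G.Adj u v ↔ ∃ p : T.Walk (f u) (f v), p.IsPath ∧ k ≤ (p.edges.map w).sum) := by
  classical
  obtain ⟨g, t, hg, ht, hGadj⟩ := hG
  rcases isEmpty_or_nonempty V with hV | hV
  · refine ⟨1, ⊥, fun _ => 0, fun v => isEmptyElim v, 0, ?_, ?_, ?_, ?_, ?_, ?_⟩
    · exact SimpleGraph.Connected.mk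
        (fun a b => by rw [Subsingleton.elim a b])
    · intro v c hc
      cases c with
      | nil => exact hc.ne_nil rfl
      | cons h _ => exact h.elim
    · intro e _; exact le_refl 0
    · intro a; exact isEmptyElim a
    · intro v; exact isEmptyElim v
    · intro u; exact isEmptyElim u
  · have hmpos : 0 < Fintype.card V := Fintype.card_pos
    set m := Fintype.card V with hmdef
    -- sorted enumeration of the vertices by tolerance
    obtain ⟨vt, idx, hvt, hmono⟩ :
        ∃ (vt : Fin m → V) (idx : V → Fin m),
          (∀ v, vt (idx v) = v) ∧ ∀ a b : Fin m, a ≤ b → t (vt a) ≤ t (vt b) := by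
      refine ⟨fun i => (Fintype.equivFin V).symm (Tuple.sort (t ∘ (Fintype.equivFin V).symm) i),
        fun v => (Tuple.sort (t ∘ (Fintype.equivFin V).symm)).symm ((Fintype.equivFin V) v),
        by simp, fun a b h => Tuple.monotone_sort (t ∘ (Fintype.equivFin V).symm) h⟩
    have hidxinj : Function.Injective idx := fun a b h => by
      have h2 := congrArg vt h; rwa [hvt, hvt] at h2
    set M : ℝ := ∑ v, t v with hMdef
    have hM : ∀ v, t v ≤ M := fun v =>
      Finset.single_le_sum (fun w _ => (ht w).le) (Finset.mem_univ v)
    obtain ⟨tN, htN⟩ : ∃ tN : ℕ → ℝ, ∀ (n : ℕ) (h : n < m), tN n = t (vt ⟨n, h⟩) :=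
      ⟨fun n => if h : n < m then t (vt ⟨n, h⟩) else 1, fun n h => dif_pos h⟩
    obtain ⟨gN, hgN⟩ : ∃ gN : ℕ → ℝ, ∀ (n : ℕ) (h : n < m), gN n = g (vt ⟨n, h⟩) :=
      ⟨fun n => if h : n < m then g (vt ⟨n, h⟩) else 1, fun n h => dif_pos h⟩
    set A : ℕ → ℝ := fun n => gN n + M - tN n / 2 with hAdef
    set P : ℕ → ℝ := fun n => tN n / 2 with hPdef
    refine ⟨2 * m, TTmLPG.catG m, TTmLPG.wcat m A P,
      fun v => ⟨m + (idx v).val, by have := (idx v).isLt; omega⟩, 2 * M,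
      TTmLPG.catG_connected m hmpos, TTmLPG.catG_acyclic m, ?_, ?_, ?_, ?_⟩
    · refine TTmLPG.wcat_nonneg m A P ?_ ?_
      · intro n hn
        have h1 : tN n = t (vt ⟨n, hn⟩) := htN n hn
        have h2 : gN n = g (vt ⟨n, hn⟩) := hgN n hn
        have h3 := hM (vt ⟨n, hn⟩)
        have h4 := hg (vt ⟨n, hn⟩)
        have h5 := ht (vt ⟨n, hn⟩)
        simp only [hAdef]
        rw [h1, h2]
        linarith
      · intro n hn
        have h1 : tN n = t (vt ⟨n, by omega⟩) := htN n (by omega)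
        have h2 : tN (n+1) = t (vt ⟨n+1, hn⟩) := htN (n+1) hn
        have h3 : t (vt ⟨n, by omega⟩) ≤ t (vt ⟨n+1, hn⟩) :=
          hmono _ _ (by rw [Fin.le_def]; simp)
        simp only [hPdef]
        rw [h1, h2]
        linarith
    · intro a b hab
      have h2 : m + (idx a).val = m + (idx b).val := congrArg Fin.val hab
      exact hidxinj (Fin.ext (by omega))
    · intro v
      exact TTmLPG.catG_leaf_unique m (idx v).val (idx v).isLt
    · intro u v huv
      have hne : (idx u).val ≠ (idx v).val :=
        fun h => huv (hidxinj (Fin.ext h))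
      have main : ∀ u v : V, u ≠ v → (idx u).val < (idx v).val →
          (G.Adj u v ↔ ∃ p : (TTmLPG.catG m).Walk
              ⟨m + (idx u).val, by have := (idx u).isLt; omega⟩
              ⟨m + (idx v).val, by have := (idx v).isLt; omega⟩,
            p.IsPath ∧ 2 * M ≤ (p.edges.map (TTmLPG.wcat m A P)).sum) := by
        intro u v huv' hlt
        rw [TTmLPG.catG_dist_iff m A P _ _ hlt (idx v).isLt]
        have htu : tN (idx u).val = t u := by
          rw [htN _ (idx u).isLt, Fin.eta, hvt]
        have htv : tN (idx v).val = t v := by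
          rw [htN _ (idx v).isLt, Fin.eta, hvt]
        have hgu : gN (idx u).val = g u := by
          rw [hgN _ (idx u).isLt, Fin.eta, hvt]
        have hgv : gN (idx v).val = g v := by
          rw [hgN _ (idx v).isLt, Fin.eta, hvt]
        have hsum : A (idx u).val + (P (idx v).val - P (idx u).val) + A (idx v).val
            = g u + g v + 2 * M - t u := by
          simp only [hAdef, hPdef]
          rw [htu, htv, hgu, hgv]
          ring
        rw [hsum]
        have hmin : min (t u) (t v) = t u := min_eq_left (by
          have h3 : t (vt (idx u)) ≤ t (vt (idx v)) :=
            hmono _ _ (by rw [Fin.le_def]; omega)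
          rwa [hvt, hvt] at h3)
        rw [hGadj u v huv', hmin]
        constructor <;> intro <;> linarith
      rcases lt_or_gt_of_ne hne with hlt | hgt
      · exact main u v huv hlt
      · exact (G.adj_comm u v).trans
          ((main v u (Ne.symm huv) hgt).trans
            (TTmLPG.exists_path_reverse (TTmLPG.wcat m A P) (2 * M)))
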